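/- For n ≥ 2 and m ≥ 1 with m ≥ 2, any local antimagic labeling of f_n∘O_m in which the maximum label q = m(2n+1)+3n is assigned to an edge incident to some triangle vertex u_1 (either xu_1 or a pendant edge at u_1) induces at least m(2n+1)+3 distinct vertex weights. -/

import Mathlib

open scoped Classical

/-- Vertex weight: sum of labels of incident edges. -/
noncomputable def weightLA {V : Type} [Fintype V] [DecidableEq V]
    (G : SimpleGraph V) (f : Sym2 V → ℕ) (u : V) : ℕ :=
  ∑ e ∈ G.edgeFinset.filter (fun e => u ∈ e), f e

/-- A local antimagic labeling: a bijection from the edge set onto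
`{1, …, q}` such that adjacent vertices get distinct weights. -/
noncomputable def IsLocalAntimagicLA {V : Type} [Fintype V] [DecidableEq V]
    (G : SimpleGraph V) (f : Sym2 V → ℕ) : Prop :=
  Set.BijOn f G.edgeSet (Set.Icc 1 G.edgeFinset.card) ∧
  ∀ u v, G.Adj u v → weightLA G f u ≠ weightLA G f v

/-- Number of distinct induced vertex colors (weights). -/
noncomputable def colorCountLA {V : Type} [Fintype V] [DecidableEq V]
    (G : SimpleGraph V) (f : Sym2 V → ℕ) : ℕ :=
  (Finset.univ.image (weightLA G f)).card

/-- Local antimagic chromatic number. -/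
noncomputable def chiLA {V : Type} [Fintype V] [DecidableEq V]
    (G : SimpleGraph V) : ℕ :=
  sInf {c | ∃ f, IsLocalAntimagicLA G f ∧ colorCountLA G f = c}

/-- Vertex set of `f_n ∘ O_m`: the center `x`, the triangle vertices
`u_i, v_i` (encoded `Fin n × Fin 2`), the pendants `x_j` at `x`, and the
pendants at the triangle vertices. -/
abbrev FriendCorV (n m : ℕ) : Type :=
  Unit ⊕ (Fin n × Fin 2) ⊕ (Fin m ⊕ Fin n × Fin 2 × Fin m)

/-- The corona product `f_n ∘ O_m` of the friendship graph with the null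
graph of order `m`. -/
noncomputable def friendshipCorona (n m : ℕ) : SimpleGraph (FriendCorV n m) :=
  SimpleGraph.fromRel (fun a b =>
    match a, b with
    | Sum.inl _, Sum.inr (Sum.inl _) => True
    | Sum.inl _, Sum.inr (Sum.inr (Sum.inl _)) => True
    | Sum.inr (Sum.inl (i, k)), Sum.inr (Sum.inl (i', k')) => i = i' ∧ k ≠ k'
    | Sum.inr (Sum.inl (i, k)), Sum.inr (Sum.inr (Sum.inr (i', k', _))) =>
        i = i' ∧ k = k'
    | _, _ => False)

open Finset

section Helpers

lemma incidence_filter_eq {V : Type} [Fintype V] [DecidableEq V] (G : SimpleGraph V) (u : V) :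
    G.edgeFinset.filter (fun e => u ∈ e) = (G.neighborFinset u).image (fun w => s(u, w)) := by
  ext e
  induction e using Sym2.ind with
  | _ a b =>
    simp only [Finset.mem_filter, SimpleGraph.mem_edgeFinset, SimpleGraph.mem_edgeSet,
      Sym2.mem_iff, Finset.mem_image, SimpleGraph.mem_neighborFinset, Sym2.eq_iff]
    constructor
    · rintro ⟨hab, h | h⟩
      · exact ⟨b, by rw [h]; exact hab, Or.inl ⟨h, rfl⟩⟩
      · exact ⟨a, by rw [h]; exact hab.symm, Or.inr ⟨h, rfl⟩⟩
    · rintro ⟨w, hw, ⟨rfl, rfl⟩ | ⟨rfl, rfl⟩⟩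
      · exact ⟨hw, Or.inl rfl⟩
      · exact ⟨hw.symm, Or.inr rfl⟩

lemma weight_eq_sum_nbrs {V : Type} [Fintype V] [DecidableEq V] (G : SimpleGraph V)
    (f : Sym2 V → ℕ) (u : V) :
    weightLA G f u = ∑ w ∈ G.neighborFinset u, f s(u, w) := by
  rw [weightLA, incidence_filter_eq, Finset.sum_image]
  intro a _ b _ h
  exact Sym2.congr_right.mp h

lemma sum_distinct_ge (s : Finset ℕ) (h : ∀ a ∈ s, 1 ≤ a) :
    s.card * (s.card + 1) ≤ 2 * ∑ a ∈ s, a := by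
  induction s using Finset.strongInduction with
  | _ s ih =>
    rcases s.eq_empty_or_nonempty with rfl | hs
    · simp
    · obtain ⟨M, hM, hmax⟩ := s.exists_max_image id hs
      have hcard : s.card ≤ M := by
        have : s ⊆ Finset.Icc 1 M := fun a ha => Finset.mem_Icc.mpr ⟨h a ha, hmax a ha⟩
        simpa using Finset.card_le_card this
      have he := ih (s.erase M) (Finset.erase_ssubset hM)
        (fun a ha => h a (Finset.mem_of_mem_erase ha))
      have hce : (s.erase M).card = s.card - 1 := Finset.card_erase_of_mem hM
      have hsum : ∑ a ∈ s, a = M + ∑ a ∈ s.erase M, a := (Finset.add_sum_erase s id hM).symm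
      have hc1 : 1 ≤ s.card := Finset.card_pos.mpr hs
      obtain ⟨c, hc⟩ : ∃ c, s.card = c + 1 := ⟨s.card - 1, by omega⟩
      rw [hsum, hc]
      rw [hce, hc] at he
      simp only [Nat.add_sub_cancel] at he
      rw [hc] at hcard
      nlinarith [he, hcard]

lemma sum_biUnion_le' {α β : Type*} [DecidableEq β] (s : Finset α) (g : α → Finset β)
    (f : β → ℕ) : ∑ e ∈ s.biUnion g, f e ≤ ∑ a ∈ s, ∑ e ∈ g a, f e := by
  induction s using Finset.induction with
  | empty => simp
  | @insert a s ha ih =>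
    rw [Finset.biUnion_insert, Finset.sum_insert ha]
    have hsplit : g a ∪ s.biUnion g = g a ∪ (s.biUnion g \ g a) := by
      rw [Finset.union_sdiff_self_eq_union]
    calc ∑ e ∈ g a ∪ s.biUnion g, f e
        = (∑ e ∈ g a, f e) + ∑ e ∈ s.biUnion g \ g a, f e := by
          rw [hsplit, Finset.sum_union Finset.disjoint_sdiff]
      _ ≤ (∑ e ∈ g a, f e) + ∑ e ∈ s.biUnion g, f e :=
          Nat.add_le_add_left (Finset.sum_le_sum_of_subset (Finset.sdiff_subset)) _
      _ ≤ (∑ e ∈ g a, f e) + ∑ a ∈ s, ∑ e ∈ g a, f e := Nat.add_le_add_left ih _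

lemma weight_sum_lb {V : Type} [Fintype V] [DecidableEq V] (G : SimpleGraph V)
    (f : Sym2 V → ℕ) (Q : ℕ) (hinj : Set.InjOn f G.edgeSet)
    (hmem : Set.MapsTo f G.edgeSet (Set.Icc 1 Q)) (u : V) :
    (G.neighborFinset u).card * ((G.neighborFinset u).card + 1) ≤ 2 * weightLA G f u := by
  rw [weight_eq_sum_nbrs]
  have hginj : ∀ w ∈ G.neighborFinset u, ∀ w' ∈ G.neighborFinset u,
      f s(u, w) = f s(u, w') → w = w' := by
    intro w hw w' hw' h
    rw [SimpleGraph.mem_neighborFinset] at hw hw'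
    exact Sym2.congr_right.mp (hinj ((SimpleGraph.mem_edgeSet G).mpr hw)
      ((SimpleGraph.mem_edgeSet G).mpr hw') h)
  have himg : ∑ w ∈ G.neighborFinset u, f s(u, w)
      = ∑ a ∈ (G.neighborFinset u).image (fun w => f s(u, w)), a :=
    (Finset.sum_image (f := fun a => a) hginj).symm
  rw [himg]
  have hcard : ((G.neighborFinset u).image (fun w => f s(u, w))).card
      = (G.neighborFinset u).card := Finset.card_image_of_injOn hginj
  rw [← hcard]
  refine sum_distinct_ge _ ?_
  intro a ha
  obtain ⟨w, hw, rfl⟩ := Finset.mem_image.mp ha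
  rw [SimpleGraph.mem_neighborFinset] at hw
  exact (hmem ((SimpleGraph.mem_edgeSet G).mpr hw)).1

end Helpers

section FC
variable {n m : ℕ}

def vx : FriendCorV n m := Sum.inl ()
def vU (ik : Fin n × Fin 2) : FriendCorV n m := Sum.inr (Sum.inl ik)
def vXP (j : Fin m) : FriendCorV n m := Sum.inr (Sum.inr (Sum.inl j))
def vTP (i : Fin n) (k : Fin 2) (j : Fin m) : FriendCorV n m :=
  Sum.inr (Sum.inr (Sum.inr (i, k, j)))

lemma fin2_self_ne (k : Fin 2) : k ≠ k + 1 := by revert k; decide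

lemma fin2_ne_iff (k k' : Fin 2) : k' ≠ k ↔ k' = k + 1 := by revert k k'; decide

lemma nb_x : (friendshipCorona n m).neighborFinset vx =
    (univ.image fun ik : Fin n × Fin 2 => vU ik) ∪ (univ.image fun j : Fin m => vXP j) := by
  ext w
  rw [SimpleGraph.mem_neighborFinset]
  rcases w with _ | w
  · simp [friendshipCorona, SimpleGraph.fromRel_adj, vx, vU, vXP]
  rcases w with ik | w
  · simp [friendshipCorona, SimpleGraph.fromRel_adj, vx, vU, vXP]
  rcases w with j | ikj
  · simp [friendshipCorona, SimpleGraph.fromRel_adj, vx, vU, vXP]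
  · simp [friendshipCorona, SimpleGraph.fromRel_adj, vx, vU, vXP, vTP]

lemma nb_U (i : Fin n) (k : Fin 2) : (friendshipCorona n m).neighborFinset (vU (i,k)) =
    insert vx (insert (vU (i, k+1)) (univ.image fun j : Fin m => vTP i k j)) := by
  ext w
  rw [SimpleGraph.mem_neighborFinset]
  rcases w with _ | w
  · simp [friendshipCorona, SimpleGraph.fromRel_adj, vx, vU, vXP, vTP]
  rcases w with ⟨i',k'⟩ | w
  · simp only [friendshipCorona, SimpleGraph.fromRel_adj, SimpleGraph.mem_neighborFinset,
      mem_insert, mem_image, mem_univ, vx, vU, vTP]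
    constructor
    · rintro ⟨hne, ⟨rfl, hk⟩ | ⟨rfl, hk⟩⟩
      · exact Or.inr (Or.inl (by rw [(fin2_ne_iff k k').mp (Ne.symm hk)]))
      · exact Or.inr (Or.inl (by rw [(fin2_ne_iff k k').mp hk]))
    · rintro (h | h | ⟨j, h⟩)
      · exact absurd h (by simp)
      · obtain ⟨rfl, rfl⟩ : i' = i ∧ k' = k + 1 := by
          simpa [Prod.ext_iff] using h
        exact ⟨by simp [Prod.ext_iff, (fin2_self_ne k)], Or.inl ⟨rfl, fin2_self_ne k⟩⟩
      · exact absurd h (by simp)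
  rcases w with j | ⟨i',k',j⟩
  · simp [friendshipCorona, SimpleGraph.fromRel_adj, vx, vU, vXP, vTP]
  · simp only [friendshipCorona, SimpleGraph.fromRel_adj, SimpleGraph.mem_neighborFinset,
      mem_insert, mem_image, mem_univ, vx, vU, vTP]
    constructor
    · rintro ⟨hne, ⟨rfl, rfl⟩ | h⟩
      · exact Or.inr (Or.inr ⟨j, by simp⟩)
      · exact absurd h (by simp)
    · rintro (h | h | ⟨j', h⟩) <;> simp_all

lemma nb_XP (j : Fin m) : (friendshipCorona n m).neighborFinset (vXP j) = {vx} := by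
  ext w
  rw [SimpleGraph.mem_neighborFinset]
  rcases w with _ | w
  · simp [friendshipCorona, SimpleGraph.fromRel_adj, vx, vXP]
  rcases w with ik | w
  · simp [friendshipCorona, SimpleGraph.fromRel_adj, vx, vU, vXP]
  rcases w with j' | ikj
  · simp [friendshipCorona, SimpleGraph.fromRel_adj, vx, vXP]
  · simp [friendshipCorona, SimpleGraph.fromRel_adj, vx, vXP, vTP]

lemma nb_TP (i : Fin n) (k : Fin 2) (j : Fin m) :
    (friendshipCorona n m).neighborFinset (vTP i k j) = {vU (i,k)} := by
  ext w
  rw [SimpleGraph.mem_neighborFinset]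
  rcases w with _ | w
  · simp [friendshipCorona, SimpleGraph.fromRel_adj, vx, vU, vTP]
  rcases w with ⟨i',k'⟩ | w
  · simp [friendshipCorona, SimpleGraph.fromRel_adj, Prod.ext_iff, and_comm, eq_comm, vU, vTP]
  rcases w with j' | ⟨i',k',j'⟩
  · simp [friendshipCorona, SimpleGraph.fromRel_adj, vXP, vU, vTP]
  · simp [friendshipCorona, SimpleGraph.fromRel_adj, vU, vTP, Prod.ext_iff]

lemma card_nb_x : ((friendshipCorona n m).neighborFinset vx).card = 2 * n + m := by
  rw [nb_x, card_union_of_disjoint, card_image_of_injective _ (by intro a b h; simpa [vU] using h),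
    card_image_of_injective _ (by intro a b h; simpa [vXP] using h)]
  · simp [mul_comm]
  · simp only [disjoint_left, mem_image, mem_univ, true_and]
    rintro a ⟨ik, rfl⟩ ⟨j, h⟩
    simp [vU, vXP] at h

lemma card_nb_U (i : Fin n) (k : Fin 2) :
    ((friendshipCorona n m).neighborFinset (vU (i,k))).card = m + 2 := by
  rw [nb_U, card_insert_of_notMem, card_insert_of_notMem,
    card_image_of_injective _ (by intro a b h; simpa [vTP] using h)]
  · simp
  · simp only [mem_image, mem_univ, true_and, vU, vTP]
    rintro ⟨j, h⟩; simp at h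
  · simp only [mem_insert, mem_image, mem_univ, true_and, vx, vU, vTP]
    rintro (h | ⟨j, h⟩) <;> simp at h

lemma edge_card : (friendshipCorona n m).edgeFinset.card = 2 * n * m + m + 3 * n := by
  have h := SimpleGraph.sum_degrees_eq_twice_card_edges (friendshipCorona n m)
  rw [Fintype.sum_sum_type, Fintype.sum_sum_type, Fintype.sum_sum_type] at h
  simp only [SimpleGraph.degree] at h
  have h1 : ∑ _u : Unit, ((friendshipCorona n m).neighborFinset (Sum.inl _u)).card = 2 * n + m := by
    rw [Fintype.sum_unique]; convert card_nb_x (n := n) (m := m) <;> rfl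
  have h2 : ∑ ik : Fin n × Fin 2, ((friendshipCorona n m).neighborFinset (Sum.inr (Sum.inl ik))).card
      = 2 * n * (m + 2) := by
    have : ∀ ik : Fin n × Fin 2, ((friendshipCorona n m).neighborFinset (Sum.inr (Sum.inl ik))).card = m + 2 := by
      rintro ⟨i, k⟩; convert card_nb_U i k <;> rfl
    simp [this, Fintype.card_prod]; ring
  have h3 : ∑ j : Fin m, ((friendshipCorona n m).neighborFinset (Sum.inr (Sum.inr (Sum.inl j)))).card = m := by
    have : ∀ j : Fin m, ((friendshipCorona n m).neighborFinset (Sum.inr (Sum.inr (Sum.inl j)))).card = 1 := by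
      intro j; rw [show (Sum.inr (Sum.inr (Sum.inl j)) : FriendCorV n m) = vXP j from rfl, nb_XP]; simp
    simp [this]
  have h4 : ∑ z : Fin n × Fin 2 × Fin m, ((friendshipCorona n m).neighborFinset (Sum.inr (Sum.inr (Sum.inr z)))).card = 2 * n * m := by
    have : ∀ z : Fin n × Fin 2 × Fin m, ((friendshipCorona n m).neighborFinset (Sum.inr (Sum.inr (Sum.inr z)))).card = 1 := by
      rintro ⟨i, k, j⟩
      rw [show (Sum.inr (Sum.inr (Sum.inr (i,k,j))) : FriendCorV n m) = vTP i k j from rfl, nb_TP]; simp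
    simp [this, Fintype.card_prod]; ring
  rw [h1, h2, h3, h4] at h
  have h5 : 2 * (2 * n * m + m + 3 * n) = 2 * (friendshipCorona n m).edgeFinset.card := by
    rw [← h]; ring
  exact (Nat.eq_of_mul_eq_mul_left (by norm_num) h5).symm

lemma adj_x_U (ik : Fin n × Fin 2) : (friendshipCorona n m).Adj vx (vU ik) := by
  rw [← SimpleGraph.mem_neighborFinset, nb_x]
  simp

lemma adj_x_XP (j : Fin m) : (friendshipCorona n m).Adj vx (vXP j) := by
  rw [← SimpleGraph.mem_neighborFinset, nb_x]
  simp

lemma adj_U_partner (i : Fin n) (k : Fin 2) :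
    (friendshipCorona n m).Adj (vU (i,k)) (vU (i,k+1)) := by
  rw [← SimpleGraph.mem_neighborFinset, nb_U]
  simp

lemma adj_U_TP (i : Fin n) (k : Fin 2) (j : Fin m) :
    (friendshipCorona n m).Adj (vU (i,k)) (vTP i k j) := by
  rw [← SimpleGraph.mem_neighborFinset, nb_U]
  simp

lemma weight_XP (f : Sym2 (FriendCorV n m) → ℕ) (j : Fin m) :
    weightLA (friendshipCorona n m) f (vXP j) = f s(vx, vXP j) := by
  rw [weight_eq_sum_nbrs, nb_XP, Finset.sum_singleton, Sym2.eq_swap]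

lemma weight_TP (f : Sym2 (FriendCorV n m) → ℕ) (i : Fin n) (k : Fin 2) (j : Fin m) :
    weightLA (friendshipCorona n m) f (vTP i k j) = f s(vU (i,k), vTP i k j) := by
  rw [weight_eq_sum_nbrs, nb_TP, Finset.sum_singleton, Sym2.eq_swap]

end FC
section FC2
open Finset
variable {n m : ℕ}

def pvert (z : Fin m ⊕ Fin n × Fin 2 × Fin m) : FriendCorV n m := Sum.inr (Sum.inr z)

def pedge : (Fin m ⊕ Fin n × Fin 2 × Fin m) → Sym2 (FriendCorV n m)
  | Sum.inl j => s(vx, vXP j)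
  | Sum.inr (i, k, j) => s(vU (i,k), vTP i k j)

lemma pedge_mem (z : Fin m ⊕ Fin n × Fin 2 × Fin m) :
    pedge z ∈ (friendshipCorona n m).edgeSet := by
  rcases z with j | ⟨i, k, j⟩
  · exact (SimpleGraph.mem_edgeSet _).mpr (adj_x_XP j)
  · exact (SimpleGraph.mem_edgeSet _).mpr (adj_U_TP i k j)

lemma pedge_inj : Function.Injective (pedge (n := n) (m := m)) := by
  rintro (j | ⟨i, k, j⟩) (j' | ⟨i', k', j'⟩) h <;>
    simp only [pedge, Sym2.eq_iff, vx, vXP, vU, vTP, Prod.mk.injEq] at h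
  · rcases h with ⟨-, h⟩ | ⟨h, -⟩ <;> simp_all
  · rcases h with ⟨h, -⟩ | ⟨h, -⟩ <;> simp_all
  · rcases h with ⟨h, -⟩ | ⟨-, h⟩ <;> simp_all
  · rcases h with ⟨h1, h2⟩ | ⟨h1, h2⟩ <;> simp_all

lemma weight_pvert (f : Sym2 (FriendCorV n m) → ℕ) (z : Fin m ⊕ Fin n × Fin 2 × Fin m) :
    weightLA (friendshipCorona n m) f (pvert z) = f (pedge z) := by
  rcases z with j | ⟨i, k, j⟩
  · exact weight_XP f j
  · exact weight_TP f i k j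

lemma final_arith (n m t : ℕ) (hn : 2 ≤ n) (hm : 2 ≤ m) (ht : n ≤ t)
    (h : (t*(m+1)+n) * (t*(m+1)+n+1) ≤ 2*t*(2*n*m+m+3*n)) : False := by
  obtain ⟨d, rfl⟩ : ∃ d, t = n + d := ⟨t - n, by omega⟩
  obtain ⟨n', rfl⟩ : ∃ n', n = n' + 2 := ⟨n - 2, by omega⟩
  obtain ⟨m', rfl⟩ : ∃ m', m = m' + 2 := ⟨m - 2, by omega⟩
  nlinarith [Nat.zero_le (d*m'*m'), Nat.zero_le (n'*m'*m'), Nat.zero_le (d*d*m'),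
    Nat.zero_le (n'*n'*m'), Nat.zero_le (d*d), Nat.zero_le (n'*d*m')]

/-- the `L` edges used in the counting argument -/
noncomputable def ETset (n m : ℕ) (T : Finset (Fin n × Fin 2)) : Finset (Sym2 (FriendCorV n m)) :=
  (T.biUnion fun ik =>
    insert s(vx, vU ik) ((univ : Finset (Fin m)).image fun j => s(vU ik, vTP ik.1 ik.2 j)))
  ∪ ((univ : Finset (Fin n)).image fun i => s(vU (i,0), vU (i,1)))

lemma ET_edges (T : Finset (Fin n × Fin 2)) :
    ∀ e ∈ ETset n m T, e ∈ (friendshipCorona n m).edgeSet := by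
  intro e he
  rw [ETset, mem_union] at he
  rcases he with he | he
  · obtain ⟨ik, -, he⟩ := mem_biUnion.mp he
    rcases mem_insert.mp he with rfl | he
    · exact (SimpleGraph.mem_edgeSet _).mpr (adj_x_U ik)
    · obtain ⟨j, -, rfl⟩ := mem_image.mp he
      obtain ⟨i, k⟩ := ik
      exact (SimpleGraph.mem_edgeSet _).mpr (adj_U_TP i k j)
  · obtain ⟨i, -, rfl⟩ := mem_image.mp he
    have h := adj_U_partner (m := m) i 0
    have h01 : (0 : Fin 2) + 1 = 1 := rfl
    rw [h01] at h
    exact (SimpleGraph.mem_edgeSet _).mpr h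

lemma ET_subset (T : Finset (Fin n × Fin 2)) (hTk : ∀ i, ∃ k, (i, k) ∈ T) :
    ETset n m T ⊆ T.biUnion (fun ik =>
      (friendshipCorona n m).edgeFinset.filter (fun e => vU ik ∈ e)) := by
  intro e he
  rw [ETset, mem_union] at he
  have hedge : e ∈ (friendshipCorona n m).edgeFinset := by
    rw [SimpleGraph.mem_edgeFinset]
    exact ET_edges T e (by rw [ETset, mem_union]; exact he)
  rcases he with he | he
  · obtain ⟨ik, hikT, he⟩ := mem_biUnion.mp he
    refine mem_biUnion.mpr ⟨ik, hikT, mem_filter.mpr ⟨hedge, ?_⟩⟩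
    rcases mem_insert.mp he with rfl | he
    · exact Sym2.mem_mk_right _ _
    · obtain ⟨j, -, rfl⟩ := mem_image.mp he
      exact Sym2.mem_mk_left _ _
  · obtain ⟨i, -, rfl⟩ := mem_image.mp he
    obtain ⟨k, hkT⟩ := hTk i
    refine mem_biUnion.mpr ⟨(i, k), hkT, mem_filter.mpr ⟨hedge, ?_⟩⟩
    have h01 : ∀ k2 : Fin 2, k2 = 0 ∨ k2 = 1 := by decide
    rcases h01 k with rfl | rfl
    · exact Sym2.mem_mk_left _ _
    · exact Sym2.mem_mk_right _ _

lemma ET_card (T : Finset (Fin n × Fin 2)) :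
    (ETset n m T).card = T.card * (m + 1) + n := by
  rw [ETset]
  have hs1card : ∀ ik : Fin n × Fin 2,
      (insert s(vx, vU ik) ((univ : Finset (Fin m)).image
        fun j => s(vU ik, vTP ik.1 ik.2 j))).card = m + 1 := by
    intro ik
    rw [card_insert_of_notMem, card_image_of_injective]
    · simp
    · intro a b h
      simpa [Sym2.eq_iff, vU, vTP, Prod.ext_iff] using h
    · simp only [mem_image, mem_univ, true_and, not_exists]
      intro j h
      simp [Sym2.eq_iff, vx, vU, vTP] at h
  have hdisj1 : ∀ a ∈ T, ∀ b ∈ T, a ≠ b →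
      Disjoint (insert s(vx, vU a) ((univ : Finset (Fin m)).image
          fun j => s(vU a, vTP a.1 a.2 j)))
        (insert s(vx, vU b) ((univ : Finset (Fin m)).image
          fun j => s(vU b, vTP b.1 b.2 j))) := by
    intro a _ b _ hab
    rw [Finset.disjoint_left]
    intro e hea heb
    apply hab
    rcases mem_insert.mp hea with rfl | hea
    · rcases mem_insert.mp heb with heq | heb
      · have : vU (n := n) (m := m) a = vU b := Sym2.congr_right.mp heq
        simpa [vU] using this
      · obtain ⟨j, -, heq⟩ := mem_image.mp heb
        exact absurd heq (by simp [Sym2.eq_iff, vx, vU, vTP])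
    · obtain ⟨j, -, rfl⟩ := mem_image.mp hea
      rcases mem_insert.mp heb with heq | heb
      · exact absurd heq (by simp [Sym2.eq_iff, vx, vU, vTP])
      · obtain ⟨j', -, heq⟩ := mem_image.mp heb
        rcases Sym2.eq_iff.mp heq with ⟨h1, -⟩ | ⟨h1, -⟩
        · have : b = a := by simpa [vU] using h1
          exact this.symm
        · exact absurd h1 (by simp [vU, vTP])
  have hbi : (T.biUnion fun ik =>
      insert s(vx, vU ik) ((univ : Finset (Fin m)).image
        fun j => s(vU ik, vTP ik.1 ik.2 j))).card = T.card * (m + 1) := by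
    rw [Finset.card_biUnion hdisj1]
    rw [Finset.sum_congr rfl (fun ik _ => hs1card ik), Finset.sum_const, smul_eq_mul]
  have htri : ((univ : Finset (Fin n)).image fun i => s(vU (n := n) (m := m) (i,0), vU (i,1))).card = n := by
    have hinj' : Function.Injective (fun i : Fin n => s(vU (n := n) (m := m) (i,0), vU (i,1))) := by
      intro a b h
      simpa [Sym2.eq_iff, vU, Prod.ext_iff] using h
    rw [card_image_of_injective _ hinj']
    simp
  have hdisj2 : Disjoint (T.biUnion fun ik =>
      insert s(vx, vU ik) ((univ : Finset (Fin m)).image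
        fun j => s(vU ik, vTP ik.1 ik.2 j)))
      ((univ : Finset (Fin n)).image fun i => s(vU (i,0), vU (i,1))) := by
    rw [Finset.disjoint_right]
    intro e he hbiu
    obtain ⟨i, -, rfl⟩ := mem_image.mp he
    obtain ⟨ik, -, hik⟩ := mem_biUnion.mp hbiu
    rcases mem_insert.mp hik with heq | hik
    · simp [Sym2.eq_iff, vx, vU] at heq
    · obtain ⟨j, -, heq⟩ := mem_image.mp hik
      simp [Sym2.eq_iff, vU, vTP] at heq
  rw [card_union_of_disjoint hdisj2, hbi, htri]

end FC2

set_option maxHeartbeats 1000000 in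
/-- For `n ≥ 2` and `m ≥ 2`, any local antimagic labeling of `f_n ∘ O_m`
assigning the maximum label `q = m(2n+1)+3n` to an edge joining the center
`x` to a triangle vertex `u`, or to a pendant edge at a triangle vertex `u`,
induces at least `m(2n+1) + 3` distinct vertex weights. -/
theorem stmt_18 (n m : ℕ) (hn : 2 ≤ n) (hm : 2 ≤ m)
    (f : Sym2 (FriendCorV n m) → ℕ)
    (hf : IsLocalAntimagicLA (friendshipCorona n m) f)
    (hmax : ∃ i : Fin n, ∃ k : Fin 2,
      f s((Sum.inl () : FriendCorV n m), Sum.inr (Sum.inl (i, k)))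
          = m * (2 * n + 1) + 3 * n ∨
      ∃ j : Fin m,
        f s((Sum.inr (Sum.inl (i, k)) : FriendCorV n m),
            Sum.inr (Sum.inr (Sum.inr (i, k, j))))
          = m * (2 * n + 1) + 3 * n) :
    m * (2 * n + 1) + 3 ≤ colorCountLA (friendshipCorona n m) f := by
  classical
  obtain ⟨hbij, hadjne⟩ := hf
  have hQ : (friendshipCorona n m).edgeFinset.card = 2*n*m + m + 3*n := edge_card
  have hmaps : Set.MapsTo f (friendshipCorona n m).edgeSet (Set.Icc 1 (2*n*m + m + 3*n)) := by
    rw [← hQ]; exact hbij.mapsTo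
  have hinj : Set.InjOn f (friendshipCorona n m).edgeSet := hbij.injOn
  have hge1 : ∀ e ∈ (friendshipCorona n m).edgeSet, 1 ≤ f e := fun e he => (hmaps he).1
  have hleQ : ∀ e ∈ (friendshipCorona n m).edgeSet, f e ≤ 2*n*m + m + 3*n :=
    fun e he => (hmaps he).2
  have hqQ : m * (2 * n + 1) + 3 * n = 2*n*m + m + 3*n := by ring
  -- the weight of the centre exceeds the largest label
  have hwx : 2*n*m + m + 3*n < weightLA (friendshipCorona n m) f vx := by
    have h1 := weight_sum_lb (friendshipCorona n m) f (2*n*m + m + 3*n) hinj hmaps vx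
    rw [card_nb_x] at h1
    have h2 : (2*n*m + m + 3*n) * 2 < (2*n+m) * (2*n+m+1) := by nlinarith [hn, hm]
    linarith
  obtain ⟨i₀, k₀, hcase⟩ := hmax
  have hadj_xu : (friendshipCorona n m).Adj vx (vU (i₀, k₀)) := adj_x_U _
  -- the weight of the special triangle vertex exceeds the largest label
  have hwu : 2*n*m + m + 3*n < weightLA (friendshipCorona n m) f (vU (i₀, k₀)) := by
    have hgen : ∀ w₀ : FriendCorV n m,
        w₀ ∈ (friendshipCorona n m).neighborFinset (vU (i₀,k₀)) →
        w₀ ≠ vU (i₀, k₀ + 1) → f s(vU (i₀,k₀), w₀) = 2*n*m + m + 3*n →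
        2*n*m + m + 3*n < weightLA (friendshipCorona n m) f (vU (i₀,k₀)) := by
      intro w₀ hw₀ hne₀ hf₀
      have hw₁ : vU (i₀, k₀+1) ∈ (friendshipCorona n m).neighborFinset (vU (i₀,k₀)) := by
        rw [SimpleGraph.mem_neighborFinset]; exact adj_U_partner i₀ k₀
      have hsub : ({w₀, vU (i₀, k₀+1)} : Finset _) ⊆
          (friendshipCorona n m).neighborFinset (vU (i₀,k₀)) := by
        intro z hz
        rcases Finset.mem_insert.mp hz with rfl | hz
        · exact hw₀
        · rw [Finset.mem_singleton.mp hz]; exact hw₁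
      have hsl : ∑ w ∈ ({w₀, vU (i₀, k₀+1)} : Finset _), f s(vU (i₀,k₀), w)
          ≤ ∑ w ∈ (friendshipCorona n m).neighborFinset (vU (i₀,k₀)), f s(vU (i₀,k₀), w) :=
        Finset.sum_le_sum_of_subset hsub
      rw [Finset.sum_pair hne₀] at hsl
      have h1 : 1 ≤ f s(vU (i₀,k₀), vU (i₀, k₀+1)) :=
        hge1 _ ((SimpleGraph.mem_edgeSet _).mpr (adj_U_partner i₀ k₀))
      rw [weight_eq_sum_nbrs]
      omega
    rcases hcase with hc | ⟨j, hc⟩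
    · refine hgen vx ?_ ?_ ?_
      · rw [SimpleGraph.mem_neighborFinset]; exact (adj_x_U _).symm
      · simp [vx, vU]
      · rw [Sym2.eq_swap]; exact hqQ ▸ hc
    · refine hgen (vTP i₀ k₀ j) ?_ ?_ ?_
      · rw [SimpleGraph.mem_neighborFinset]; exact adj_U_TP i₀ k₀ j
      · simp [vTP, vU]
      · exact hqQ ▸ hc
  have hne_xu : weightLA (friendshipCorona n m) f vx
      ≠ weightLA (friendshipCorona n m) f (vU (i₀,k₀)) := hadjne vx (vU (i₀,k₀)) hadj_xu
  -- pendant weights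
  have hPWinj : ∀ z ∈ (Finset.univ : Finset (Fin m ⊕ Fin n × Fin 2 × Fin m)),
      ∀ z' ∈ (Finset.univ : Finset (Fin m ⊕ Fin n × Fin 2 × Fin m)),
      weightLA (friendshipCorona n m) f (pvert z) = weightLA (friendshipCorona n m) f (pvert z')
      → z = z' := by
    intro z _ z' _ h
    rw [weight_pvert, weight_pvert] at h
    exact pedge_inj (hinj (pedge_mem z) (pedge_mem z') h)
  have hPWcard : ((Finset.univ : Finset (Fin m ⊕ Fin n × Fin 2 × Fin m)).image
      (fun z => weightLA (friendshipCorona n m) f (pvert z))).card = 2*n*m + m := by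
    rw [Finset.card_image_of_injOn (fun z hz z' hz' h => hPWinj z hz z' hz' h)]
    simp only [Finset.card_univ, Fintype.card_sum, Fintype.card_prod, Fintype.card_fin]
    ring
  have hPWle : ∀ a ∈ (Finset.univ : Finset (Fin m ⊕ Fin n × Fin 2 × Fin m)).image
      (fun z => weightLA (friendshipCorona n m) f (pvert z)), a ≤ 2*n*m + m + 3*n := by
    intro a ha
    obtain ⟨z, -, rfl⟩ := Finset.mem_image.mp ha
    rw [weight_pvert]
    exact hleQ _ (pedge_mem z)
  set PW : Finset ℕ := (Finset.univ : Finset (Fin m ⊕ Fin n × Fin 2 × Fin m)).image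
      (fun z => weightLA (friendshipCorona n m) f (pvert z)) with hPW
  have hwxB : weightLA (friendshipCorona n m) f vx
      ∉ insert (weightLA (friendshipCorona n m) f (vU (i₀,k₀))) PW := by
    intro h
    rcases Finset.mem_insert.mp h with h | h
    · exact hne_xu h
    · exact absurd (hPWle _ h) (by omega)
  have hwuB : weightLA (friendshipCorona n m) f (vU (i₀,k₀)) ∉ PW := by
    intro h
    exact absurd (hPWle _ h) (by omega)
  have hBcard : (insert (weightLA (friendshipCorona n m) f vx)
      (insert (weightLA (friendshipCorona n m) f (vU (i₀,k₀))) PW)).card = 2*n*m + m + 2 := by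
    rw [Finset.card_insert_of_notMem hwxB, Finset.card_insert_of_notMem hwuB, hPWcard]
  by_contra hcon
  push_neg at hcon
  have hcc : colorCountLA (friendshipCorona n m) f
      = ((Finset.univ : Finset (FriendCorV n m)).image
          (weightLA (friendshipCorona n m) f)).card := by rw [colorCountLA]
  have hcon' : ((Finset.univ : Finset (FriendCorV n m)).image
      (weightLA (friendshipCorona n m) f)).card ≤ 2*n*m + m + 2 := by
    rw [hcc] at hcon
    omega
  have hBsub : (insert (weightLA (friendshipCorona n m) f vx)
      (insert (weightLA (friendshipCorona n m) f (vU (i₀,k₀))) PW))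
      ⊆ (Finset.univ : Finset (FriendCorV n m)).image (weightLA (friendshipCorona n m) f) := by
    intro a ha
    rcases Finset.mem_insert.mp ha with rfl | ha
    · exact Finset.mem_image_of_mem _ (Finset.mem_univ vx)
    rcases Finset.mem_insert.mp ha with rfl | ha
    · exact Finset.mem_image_of_mem _ (Finset.mem_univ _)
    · obtain ⟨z, -, rfl⟩ := Finset.mem_image.mp ha
      exact Finset.mem_image_of_mem _ (Finset.mem_univ _)
  have hBS : (insert (weightLA (friendshipCorona n m) f vx)
      (insert (weightLA (friendshipCorona n m) f (vU (i₀,k₀))) PW))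
      = (Finset.univ : Finset (FriendCorV n m)).image (weightLA (friendshipCorona n m) f) :=
    Finset.eq_of_subset_of_card_le hBsub (by omega)
  have hall : ∀ v : FriendCorV n m, weightLA (friendshipCorona n m) f v
      ∈ (insert (weightLA (friendshipCorona n m) f vx)
        (insert (weightLA (friendshipCorona n m) f (vU (i₀,k₀))) PW)) := by
    intro v
    rw [hBS]
    exact Finset.mem_image_of_mem _ (Finset.mem_univ v)
  -- triangle vertices with weight larger than the max label all share the weight of u
  have hforce : ∀ ik : Fin n × Fin 2,
      2*n*m + m + 3*n < weightLA (friendshipCorona n m) f (vU ik) →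
      weightLA (friendshipCorona n m) f (vU ik)
        = weightLA (friendshipCorona n m) f (vU (i₀,k₀)) := by
    intro ik hik
    have hB := hall (vU ik)
    rcases Finset.mem_insert.mp hB with h | hB
    · exact absurd h.symm (hadjne vx (vU ik) (adj_x_U ik))
    rcases Finset.mem_insert.mp hB with h | hB
    · exact h
    · exact absurd (hPWle _ hB) (by omega)
  set T : Finset (Fin n × Fin 2) := Finset.univ.filter
      (fun ik => weightLA (friendshipCorona n m) f (vU ik) ≤ 2*n*m + m + 3*n) with hT
  have hTk : ∀ i, ∃ k, (i,k) ∈ T := by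
    intro i
    by_contra hni
    push_neg at hni
    have h0 : 2*n*m + m + 3*n < weightLA (friendshipCorona n m) f (vU (i,0)) := by
      have := hni 0
      rw [hT] at this
      simp only [Finset.mem_filter, Finset.mem_univ, true_and] at this
      omega
    have h1 : 2*n*m + m + 3*n < weightLA (friendshipCorona n m) f (vU (i,1)) := by
      have := hni 1
      rw [hT] at this
      simp only [Finset.mem_filter, Finset.mem_univ, true_and] at this
      omega
    have hadj01 : (friendshipCorona n m).Adj (vU (i,0)) (vU (i,1)) := by
      have h := adj_U_partner (m := m) i 0
      rwa [show ((0:Fin 2)+1) = 1 from rfl] at h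
    exact hadjne _ _ hadj01 ((hforce _ h0).trans (hforce _ h1).symm)
  have hTcard : n ≤ T.card := by
    have himg : T.image Prod.fst = (Finset.univ : Finset (Fin n)) := by
      apply Finset.eq_univ_of_forall
      intro i
      obtain ⟨k, hk⟩ := hTk i
      exact Finset.mem_image.mpr ⟨(i,k), hk, rfl⟩
    calc n = (Finset.univ : Finset (Fin n)).card := by simp
      _ = (T.image Prod.fst).card := by rw [himg]
      _ ≤ T.card := Finset.card_image_le
  have hupper : ∑ ik ∈ T, weightLA (friendshipCorona n m) f (vU ik)
      ≤ T.card * (2*n*m + m + 3*n) := by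
    have h := Finset.sum_le_card_nsmul T
      (fun ik => weightLA (friendshipCorona n m) f (vU ik)) (2*n*m + m + 3*n) (by
        intro ik hik
        rw [hT] at hik
        exact (Finset.mem_filter.mp hik).2)
    simpa [smul_eq_mul] using h
  have hmid : ∑ e ∈ ETset n m T, f e
      ≤ ∑ ik ∈ T, weightLA (friendshipCorona n m) f (vU ik) := by
    calc ∑ e ∈ ETset n m T, f e
        ≤ ∑ e ∈ T.biUnion (fun ik =>
            (friendshipCorona n m).edgeFinset.filter (fun e => vU ik ∈ e)), f e :=
          Finset.sum_le_sum_of_subset (ET_subset T hTk)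
      _ ≤ ∑ ik ∈ T, ∑ e ∈ (friendshipCorona n m).edgeFinset.filter
            (fun e => vU ik ∈ e), f e := sum_biUnion_le' _ _ _
      _ = ∑ ik ∈ T, weightLA (friendshipCorona n m) f (vU ik) := by
          refine Finset.sum_congr rfl fun ik _ => ?_
          rw [weightLA]
          congr!
  have hlow : (T.card * (m+1) + n) * (T.card * (m+1) + n + 1)
      ≤ 2 * ∑ e ∈ ETset n m T, f e := by
    have hsub : ∀ e ∈ ETset n m T, e ∈ (friendshipCorona n m).edgeSet := ET_edges T
    have hfin : ∀ e ∈ ETset n m T, ∀ e' ∈ ETset n m T, f e = f e' → e = e' :=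
      fun e he e' he' h => hinj (hsub e he) (hsub e' he') h
    have h1 : ∑ e ∈ ETset n m T, f e = ∑ a ∈ (ETset n m T).image f, a :=
      (Finset.sum_image (f := fun a => a) hfin).symm
    have h3 := sum_distinct_ge ((ETset n m T).image f) (by
      intro a ha
      obtain ⟨e, he, rfl⟩ := Finset.mem_image.mp ha
      exact hge1 e (hsub e he))
    rw [Finset.card_image_of_injOn (fun e he e' he' h => hfin e he e' he' h), ET_card] at h3
    rw [h1]
    exact h3
  exact final_arith n m T.card hn hm hTcard (by
    calc (T.card*(m+1)+n) * (T.card*(m+1)+n+1)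
        ≤ 2 * ∑ e ∈ ETset n m T, f e := hlow
      _ ≤ 2 * ∑ ik ∈ T, weightLA (friendshipCorona n m) f (vU ik) := by omega
      _ ≤ 2 * (T.card * (2*n*m + m + 3*n)) := by omega
      _ = 2 * T.card * (2*n*m+m+3*n) := by ring)
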